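/- Let 1 < p < ∞ and let T be the bounded linear operator on ℓ^p(ℤ) defined by (T f)(i) = w(i+1) f(i+1), where w(i) = 2 for i ≥ 1 and w(i) = 1 for i ≤ 0. Then the point spectrum of the dual operator T^* is empty; equivalently, with 1/p + 1/q = 1, there is no λ ∈ ℂ and no nonzero f ∈ ℓ^q(ℤ) such that T^* f = λ f. -/

import Mathlib

open Filter
open scoped ENNReal

/-- Example 2.6 of the paper, point spectrum part. For the operator
`(T f)(i) = w(i+1) f(i+1)` on `ℓ^p(ℤ)` (`1 < p < ∞`), with `w(i) = 2` for `i ≥ 1` and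
`w(i) = 1` for `i ≤ 0`, the dual operator `(T^* h)(m) = w(m) h(m-1)` on `ℓ^q(ℤ)`
(where `1/p + 1/q = 1`) has empty point spectrum: there is no `λ ∈ ℂ` and no nonzero
`f ∈ lp (fun _ => ℂ) q` with `w(m) f(m-1) = λ f(m)` for all `m`. -/
theorem stmt_13 (p q : ℝ≥0∞) (hp1 : 1 < p) (hp2 : p ≠ ∞) (hpq : 1 / p + 1 / q = 1)
    (w : ℤ → ℝ) (hw : ∀ i : ℤ, w i = if 1 ≤ i then 2 else 1) :
    ¬ ∃ (l : ℂ) (f : lp (fun _ : ℤ => ℂ) q), f ≠ 0 ∧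
      ∀ m : ℤ, (w m : ℂ) * f (m - 1) = l * f m := by
  rintro ⟨l, f, hf0, hf⟩
  -- q ≠ 0
  have hq0 : q ≠ 0 := by
    rintro rfl
    simp at hpq
  -- some coordinate is nonzero
  have hm0 : ∃ m, f m ≠ 0 := by
    by_contra h
    push_neg at h
    exact hf0 (lp.ext (funext fun m => by simpa using h m))
  obtain ⟨m0, hfm0⟩ := hm0
  have hwne : ∀ m : ℤ, (w m : ℂ) ≠ 0 := by
    intro m
    rw [hw m]
    split <;> norm_num
  -- l ≠ 0
  have hl : l ≠ 0 := by
    rintro rfl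
    have h1 := hf (m0 + 1)
    rw [zero_mul, add_sub_cancel_right] at h1
    rcases mul_eq_zero.mp h1 with h | h
    · exact hwne _ h
    · exact hfm0 h
  -- all coordinates nonzero
  have hne : ∀ n : ℤ, f (m0 + n) ≠ 0 := by
    intro n
    induction n using Int.induction_on with
    | zero => simpa using hfm0
    | succ n ih =>
      intro h0
      have h1 := hf (m0 + (n + 1))
      rw [h0, mul_zero, show m0 + ((n : ℤ) + 1) - 1 = m0 + n by ring] at h1
      rcases mul_eq_zero.mp h1 with h' | h'
      · exact hwne _ h'
      · exact ih h'
    | pred n ih =>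
      intro h0
      have h1 := hf (m0 + -n)
      rw [show m0 + -(n : ℤ) - 1 = m0 + (-n - 1) by ring, h0, mul_zero] at h1
      rcases mul_eq_zero.mp h1.symm with h' | h'
      · exact hl h'
      · exact ih h'
  have hneall : ∀ m : ℤ, f m ≠ 0 := fun m => by
    have := hne (m - m0); rwa [add_sub_cancel] at this
  -- coordinates are bounded by the norm
  have hbd : ∀ m : ℤ, ‖f m‖ ≤ ‖f‖ := fun m => lp.norm_apply_le_norm hq0 f m
  have hf0pos : 0 < ‖f 0‖ := norm_pos_iff.mpr (hneall 0)
  have hlpos : 0 < ‖l‖ := norm_pos_iff.mpr hl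
  rcases le_or_gt 2 ‖l‖ with hμ | hμ
  · -- ‖l‖ ≥ 2 : grow towards -∞
    have key : ∀ n : ℕ, 2 ^ n * ‖f 0‖ ≤ ‖f (-(n : ℤ))‖ := by
      intro n
      induction n with
      | zero => simp
      | succ n ih =>
        have hm : ¬ (1 : ℤ) ≤ -(n : ℤ) := by omega
        have h1 := hf (-(n : ℤ))
        rw [hw, if_neg hm] at h1
        push_cast at h1
        rw [one_mul] at h1
        have h2 : ‖f (-(n : ℤ) - 1)‖ = ‖l‖ * ‖f (-(n : ℤ))‖ := by
          rw [h1, norm_mul]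
        have : (2 : ℝ) ^ (n + 1) * ‖f 0‖ ≤ ‖l‖ * ‖f (-(n : ℤ))‖ := by
          calc (2 : ℝ) ^ (n + 1) * ‖f 0‖ = 2 * (2 ^ n * ‖f 0‖) := by ring
            _ ≤ 2 * ‖f (-(n : ℤ))‖ := by nlinarith
            _ ≤ ‖l‖ * ‖f (-(n : ℤ))‖ := by
                have := norm_nonneg (f (-(n : ℤ))); nlinarith
        rw [show (-((n + 1 : ℕ)) : ℤ) = -(n : ℤ) - 1 by push_cast; ring, h2]
        exact_mod_cast this
    obtain ⟨n, hn⟩ := pow_unbounded_of_one_lt (‖f‖ / ‖f 0‖) (by norm_num : (1 : ℝ) < 2)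
    have : ‖f‖ < 2 ^ n * ‖f 0‖ := by
      rw [div_lt_iff₀ hf0pos] at hn; linarith
    exact absurd (le_trans (key n) (hbd _)) (by linarith)
  · -- ‖l‖ < 2 : grow towards +∞
    set r : ℝ := 2 / ‖l‖ with hr
    have hr1 : 1 < r := (one_lt_div hlpos).mpr hμ
    have key : ∀ n : ℕ, r ^ n * ‖f 0‖ ≤ ‖f (n : ℤ)‖ := by
      intro n
      induction n with
      | zero => simp
      | succ n ih =>
        have hm : (1 : ℤ) ≤ (n : ℤ) + 1 := by omega
        have h1 := hf ((n : ℤ) + 1)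
        rw [hw, if_pos hm] at h1
        push_cast at h1
        rw [add_sub_cancel_right] at h1
        have h2 : 2 * ‖f (n : ℤ)‖ = ‖l‖ * ‖f ((n : ℤ) + 1)‖ := by
          have := congrArg norm h1
          simpa [norm_mul] using this
        have h3 : ‖f ((n : ℤ) + 1)‖ = r * ‖f (n : ℤ)‖ := by
          rw [hr, div_mul_eq_mul_div, eq_div_iff hlpos.ne']
          linear_combination -h2
        have : r ^ (n + 1) * ‖f 0‖ ≤ r * ‖f (n : ℤ)‖ := by
          calc r ^ (n + 1) * ‖f 0‖ = r * (r ^ n * ‖f 0‖) := by ring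
            _ ≤ r * ‖f (n : ℤ)‖ := by nlinarith
        rw [show (((n + 1 : ℕ)) : ℤ) = (n : ℤ) + 1 by push_cast; ring, h3]
        exact_mod_cast this
    obtain ⟨n, hn⟩ := pow_unbounded_of_one_lt (‖f‖ / ‖f 0‖) hr1
    have : ‖f‖ < r ^ n * ‖f 0‖ := by
      rw [div_lt_iff₀ hf0pos] at hn; linarith
    exact absurd (le_trans (key n) (hbd _)) (by linarith)
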